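/- For a = 0 and b ∉ {0,1}, the Witt algebra module 𝒜_{0,b} with action d_m v_i = (i + bm)v_{m+i} is irreducible. -/
import Mathlib


/-- The action of the Witt-algebra generator `d_m` on the module
`𝒜_{a,b} = ⊕_{i∈ℤ} ℂ vᵢ` (encoded as `ℤ →₀ ℂ`, with `vᵢ = single i 1`):
`d_m · vᵢ = (a + i + b m) v_{m+i}`, extended linearly. -/
noncomputable def dAct (a b : ℂ) (m : ℤ) (v : ℤ →₀ ℂ) : ℤ →₀ ℂ :=
  v.sum fun i c => Finsupp.single (m + i) ((a + (i : ℂ) + b * (m : ℂ)) * c)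

lemma dAct_single (b : ℂ) (m i : ℤ) (c : ℂ) :
    dAct 0 b m (Finsupp.single i c) = Finsupp.single (m + i) (((i:ℂ) + b * m) * c) := by
  unfold dAct
  rw [Finsupp.sum_single_index] <;> simp

lemma dAct_zero_apply (b : ℂ) (u : ℤ →₀ ℂ) (k : ℤ) :
    dAct 0 b 0 u k = (k:ℂ) * u k := by
  unfold dAct
  rw [Finsupp.sum_apply, Finsupp.sum]
  simp only [Finsupp.single_apply, zero_add, Int.cast_zero, mul_zero, add_zero]
  rw [Finset.sum_ite_eq' u.support k (fun i => (i:ℂ) * u i)]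
  by_cases hk : k ∈ u.support
  · simp [hk]
  · simp [hk, Finsupp.notMem_support_iff.mp hk]

/-- From any nonzero element of a `d₀`-invariant submodule, extract a basis vector. -/
lemma extract_single (b : ℂ) (U : Submodule ℂ (ℤ →₀ ℂ))
    (hU : ∀ v ∈ U, dAct 0 b 0 v ∈ U) :
    ∀ n : ℕ, ∀ u : ℤ →₀ ℂ, u ∈ U → u ≠ 0 → u.support.card ≤ n →
      ∃ i : ℤ, Finsupp.single i (1:ℂ) ∈ U := by
  intro n
  induction n with
  | zero =>
    intro u hu hne hc
    exact absurd (Finsupp.support_eq_empty.mp (Finset.card_eq_zero.mp (Nat.le_zero.mp hc))) hne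
  | succ n ih =>
    intro u hu hne hc
    rcases Nat.lt_or_ge u.support.card 2 with hlt | hge
    · -- support has exactly one element
      obtain ⟨i, hi⟩ := Finset.card_le_one_iff_subset_singleton.mp (Nat.lt_succ_iff.mp hlt)
      have hisup : i ∈ u.support := by
        rcases Finset.subset_singleton_iff.mp hi with h0 | h1
        · exact absurd (Finsupp.support_eq_empty.mp h0) hne
        · rw [h1]; exact Finset.mem_singleton_self i
      have hui : u i ≠ 0 := Finsupp.mem_support_iff.mp hisup
      have husingle : u = Finsupp.single i (u i) := by
        ext k
        by_cases hk : k = i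
        · subst hk; rw [Finsupp.single_apply, if_pos rfl]
        · rw [Finsupp.single_apply, if_neg (fun h => hk h.symm)]
          by_contra hk0
          exact hk (Finset.mem_singleton.mp (hi (Finsupp.mem_support_iff.mpr hk0)))
      refine ⟨i, ?_⟩
      have h2 : (u i)⁻¹ • Finsupp.single i (u i) ∈ U := U.smul_mem _ (husingle ▸ hu)
      rwa [Finsupp.smul_single, smul_eq_mul, inv_mul_cancel₀ hui] at h2
    · -- support has ≥ 2 elements: strip one off
      obtain ⟨j, hj, i, hiS, hij⟩ := Finset.one_lt_card.mp hge
      set w : ℤ →₀ ℂ := dAct 0 b 0 u - (j:ℂ) • u with hw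
      have hwU : w ∈ U := U.sub_mem (hU u hu) (U.smul_mem _ hu)
      have hwapp : ∀ k : ℤ, w k = ((k:ℂ) - j) * u k := by
        intro k
        simp [hw, dAct_zero_apply, sub_mul]
      have hwi : w i ≠ 0 := by
        rw [hwapp]
        exact mul_ne_zero (sub_ne_zero.mpr (fun h => hij (Int.cast_injective h).symm))
          (Finsupp.mem_support_iff.mp hiS)
      have hwne : w ≠ 0 := fun h => hwi (by rw [h]; rfl)
      have hsub : w.support ⊆ u.support.erase j := by
        intro k hk
        have hwk := Finsupp.mem_support_iff.mp hk
        rw [hwapp] at hwk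
        refine Finset.mem_erase.mpr ⟨?_, Finsupp.mem_support_iff.mpr (right_ne_zero_of_mul hwk)⟩
        intro h; subst h
        exact hwk (by simp)
      have hcard : w.support.card ≤ n := by
        calc w.support.card ≤ (u.support.erase j).card := Finset.card_le_card hsub
          _ = u.support.card - 1 := Finset.card_erase_of_mem hj
          _ ≤ n := by omega
      exact ih w hwU hwne hcard

lemma step (b : ℂ) (U : Submodule ℂ (ℤ →₀ ℂ))
    (hU : ∀ m : ℤ, ∀ v ∈ U, dAct 0 b m v ∈ U) {i : ℤ} (m : ℤ)
    (hi : Finsupp.single i (1:ℂ) ∈ U) (hcoef : (i:ℂ) + b * m ≠ 0) :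
    Finsupp.single (m + i) (1:ℂ) ∈ U := by
  have h1 := hU m _ hi
  rw [dAct_single, mul_one] at h1
  have h2 := U.smul_mem ((i:ℂ) + b * m)⁻¹ h1
  rwa [Finsupp.smul_single, smul_eq_mul, inv_mul_cancel₀ hcoef] at h2

lemma reach (b : ℂ) (hb0 : b ≠ 0) (hb1 : b ≠ 1) (U : Submodule ℂ (ℤ →₀ ℂ))
    (hU : ∀ m : ℤ, ∀ v ∈ U, dAct 0 b m v ∈ U) {i : ℤ}
    (hi : Finsupp.single i (1:ℂ) ∈ U) (j : ℤ) :
    Finsupp.single j (1:ℂ) ∈ U := by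
  by_cases h : (i:ℂ) + b * ((j : ℤ) - i : ℤ) = 0
  · -- need two hops; first to i+1 or i+2
    by_cases h1 : (i:ℂ) + b * (1:ℤ) = 0
    · -- then i + 2b = b ≠ 0 : hop to i+2
      have hk : Finsupp.single (2 + i) (1:ℂ) ∈ U := by
        apply step b U hU 2 hi
        push_cast at h1 ⊢
        intro h2
        apply hb0
        have : (i:ℂ) = -b := by linear_combination h1
        rw [this] at h2; linear_combination h2
      have := step b U hU (j - (2 + i)) hk ?_
      · rwa [sub_add_cancel] at this
      · push_cast at h ⊢
        intro h2
        apply hb1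
        have : (2:ℂ) - 2*b = 0 := by linear_combination h2 - h
        linear_combination -this/2
    · -- hop to i+1
      have hk : Finsupp.single (1 + i) (1:ℂ) ∈ U := step b U hU 1 hi h1
      have := step b U hU (j - (1 + i)) hk ?_
      · rwa [sub_add_cancel] at this
      · push_cast at h ⊢
        intro h2
        apply hb1
        have : (1:ℂ) - b = 0 := by linear_combination h2 - h
        linear_combination -this
  · have := step b U hU (j - i) hi (by push_cast at h ⊢; exact h)
    rwa [sub_add_cancel] at this

/-- for `a = 0` and `b ∉ {0,1}`, the Witt module `𝒜_{0,b}` (with action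
`d_m vᵢ = (i + bm) v_{m+i}`) is irreducible. -/
theorem A0b_irreducible (b : ℂ) (hb0 : b ≠ 0) (hb1 : b ≠ 1) :
    ∀ U : Submodule ℂ (ℤ →₀ ℂ),
      (∀ m : ℤ, ∀ v ∈ U, dAct 0 b m v ∈ U) → U = ⊥ ∨ U = ⊤ := by
  intro U hU
  by_cases hbot : U = ⊥
  · exact Or.inl hbot
  · right
    obtain ⟨u, huU, hune⟩ := Submodule.exists_mem_ne_zero_of_ne_bot hbot
    obtain ⟨i, hi⟩ := extract_single b U (fun v hv => hU 0 v hv) u.support.card u huU hune le_rfl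
    rw [eq_top_iff]
    intro v _
    rw [← Finsupp.sum_single v, Finsupp.sum]
    apply Submodule.sum_mem
    intro k _
    have h1 : Finsupp.single k (1:ℂ) ∈ U := reach b hb0 hb1 U hU hi k
    have h2 := U.smul_mem (v k) h1
    rwa [Finsupp.smul_single, smul_eq_mul, mul_one] at h2
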